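/- Let G be a finite group, p a prime, and suppose there exist an element x ∈ G and a Sylow p-subgroup Q of the centralizer C_G(x) such that x ∈ Q but x ∉ [Q,Q]. Then G contains a non-Schur p-element; in fact x itself is a non-Schur p-element. -/

import Mathlib

/-- A non-Schur element of a group `G` is an element `x` with
`x ∉ [C_G(x), C_G(x)]`. -/
def IsNonSchur {G : Type*} [Group G] (x : G) : Prop :=
  x ∉ ⁅Subgroup.centralizer {x}, Subgroup.centralizer {x}⁆

/-- A `p`-element is an element of `p`-power order. -/
def IsPElement (p : ℕ) {G : Type*} [Group G] (x : G) : Prop :=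
  ∃ n : ℕ, orderOf x = p ^ n

theorem nonSchur_of_sylow_of_centralizer (p : ℕ) (hp : p.Prime) (G : Type*) [Group G]
    [Finite G] (x : G) (hx : x ∈ Subgroup.centralizer {x})
    (Q : Sylow p ↥(Subgroup.centralizer {x}))
    (hxQ : (⟨x, hx⟩ : ↥(Subgroup.centralizer {x})) ∈ (Q : Subgroup ↥(Subgroup.centralizer {x})))
    (hxQ' : (⟨x, hx⟩ : ↥(Subgroup.centralizer {x})) ∉
      ⁅(Q : Subgroup ↥(Subgroup.centralizer {x})), (Q : Subgroup ↥(Subgroup.centralizer {x}))⁆) :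
    (IsPElement p x ∧ IsNonSchur x) ∧ ∃ y : G, IsPElement p y ∧ IsNonSchur y := by
  haveI : Fact p.Prime := ⟨hp⟩
  have x' : ↥(Subgroup.centralizer ({x} : Set G)) := ⟨x, hx⟩
  -- x is a p-element
  have hpe : IsPElement p x := by
    obtain ⟨k, hk⟩ := IsPGroup.iff_orderOf.mp Q.2
      (⟨⟨x, hx⟩, hxQ⟩ : ↥(Q : Subgroup ↥(Subgroup.centralizer ({x} : Set G))))
    exact ⟨k, by rw [← hk, Subgroup.orderOf_mk, Subgroup.orderOf_mk]⟩
  -- x is central in its centralizer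
  have hcentral : (⟨x, hx⟩ : ↥(Subgroup.centralizer ({x} : Set G))) ∈
      Subgroup.center ↥(Subgroup.centralizer ({x} : Set G)) := by
    rw [Subgroup.mem_center_iff]
    intro g
    have hg := g.2
    rw [Subgroup.mem_centralizer_iff] at hg
    exact Subtype.ext (hg x (Set.mem_singleton x)).symm
  have hns : IsNonSchur x := by
    intro hxmem
    -- x ∈ commutator of its centralizer
    have hxcomm : (⟨x, hx⟩ : ↥(Subgroup.centralizer ({x} : Set G))) ∈
        commutator ↥(Subgroup.centralizer ({x} : Set G)) := by
      have heq : ⁅Subgroup.centralizer ({x} : Set G), Subgroup.centralizer ({x} : Set G)⁆ =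
          Subgroup.map (Subgroup.centralizer ({x} : Set G)).subtype
            (commutator ↥(Subgroup.centralizer ({x} : Set G))) := by
        rw [commutator_def, Subgroup.map_commutator, ← MonoidHom.range_eq_map,
          Subgroup.range_subtype]
      rw [heq] at hxmem
      obtain ⟨y, hy, hyx⟩ := hxmem
      rwa [show y = (⟨x, hx⟩ : ↥(Subgroup.centralizer ({x} : Set G))) from Subtype.ext hyx] at hy
    -- transfer argument
    have key : ∀ (k : ℕ) (g₀ : ↥(Subgroup.centralizer ({x} : Set G))),
        g₀⁻¹ * (⟨x, hx⟩ : ↥(Subgroup.centralizer ({x} : Set G))) ^ k * g₀ ∈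
          (Q : Subgroup ↥(Subgroup.centralizer ({x} : Set G))) →
        g₀⁻¹ * (⟨x, hx⟩ : ↥(Subgroup.centralizer ({x} : Set G))) ^ k * g₀ =
          (⟨x, hx⟩ : ↥(Subgroup.centralizer ({x} : Set G))) ^ k := by
      intro k g₀ _
      have h := Subgroup.mem_center_iff.mp (Subgroup.pow_mem _ hcentral k) g₀⁻¹
      rw [h, mul_assoc, inv_mul_cancel, mul_one]
    set n := (Q : Subgroup ↥(Subgroup.centralizer ({x} : Set G))).index with hn
    have hpow : (⟨x, hx⟩ : ↥(Subgroup.centralizer ({x} : Set G))) ^ n ∈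
        (Q : Subgroup ↥(Subgroup.centralizer ({x} : Set G))) :=
      MonoidHom.transfer_eq_pow_aux _ key
    have htr := MonoidHom.transfer_eq_pow
      (Abelianization.of (G := ↥(Q : Subgroup ↥(Subgroup.centralizer ({x} : Set G)))))
      (⟨x, hx⟩ : ↥(Subgroup.centralizer ({x} : Set G))) key
    have h1 : MonoidHom.transfer
        (Abelianization.of (G := ↥(Q : Subgroup ↥(Subgroup.centralizer ({x} : Set G)))))
        (⟨x, hx⟩ : ↥(Subgroup.centralizer ({x} : Set G))) = 1 :=
      Abelianization.commutator_subset_ker _ hxcomm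
    rw [h1] at htr
    -- hence x^n ∈ [Q, Q]
    have hmem : (⟨(⟨x, hx⟩ : ↥(Subgroup.centralizer ({x} : Set G))) ^ n, hpow⟩ :
        ↥(Q : Subgroup ↥(Subgroup.centralizer ({x} : Set G)))) ∈
        commutator ↥(Q : Subgroup ↥(Subgroup.centralizer ({x} : Set G))) := by
      have h2 := htr.symm
      rw [show (Abelianization.of
          (G := ↥(Q : Subgroup ↥(Subgroup.centralizer ({x} : Set G))))) =
        QuotientGroup.mk' (commutator ↥(Q : Subgroup ↥(Subgroup.centralizer ({x} : Set G))))
          from rfl] at h2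
      exact (QuotientGroup.eq_one_iff _).mp h2
    have hmem' : (⟨x, hx⟩ : ↥(Subgroup.centralizer ({x} : Set G))) ^ n ∈
        ⁅(Q : Subgroup ↥(Subgroup.centralizer ({x} : Set G))),
          (Q : Subgroup ↥(Subgroup.centralizer ({x} : Set G)))⁆ := by
      have heq : ⁅(Q : Subgroup ↥(Subgroup.centralizer ({x} : Set G))),
          (Q : Subgroup ↥(Subgroup.centralizer ({x} : Set G)))⁆ =
          Subgroup.map (Q : Subgroup ↥(Subgroup.centralizer ({x} : Set G))).subtype
            (commutator ↥(Q : Subgroup ↥(Subgroup.centralizer ({x} : Set G)))) := by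
        rw [commutator_def, Subgroup.map_commutator, ← MonoidHom.range_eq_map,
          Subgroup.range_subtype]
      rw [heq]
      exact ⟨_, hmem, rfl⟩
    -- coprimality and conclusion
    obtain ⟨k, hk⟩ := hpe
    have hord : orderOf (⟨x, hx⟩ : ↥(Subgroup.centralizer ({x} : Set G))) = p ^ k := by
      rw [Subgroup.orderOf_mk, hk]
    have hcop : Nat.Coprime n (orderOf (⟨x, hx⟩ : ↥(Subgroup.centralizer ({x} : Set G)))) := by
      rw [hord]
      exact Nat.Coprime.pow_right k
        (Nat.coprime_comm.mp ((Nat.Prime.coprime_iff_not_dvd hp).mpr Q.not_dvd_index))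
    rw [hord] at hcop
    rcases Nat.lt_or_ge 1 (p ^ k) with h1' | h1'
    · obtain ⟨a, -, ha⟩ := Nat.exists_mul_mod_eq_one_of_coprime hcop h1'
      have heq : (⟨x, hx⟩ : ↥(Subgroup.centralizer ({x} : Set G))) =
          ((⟨x, hx⟩ : ↥(Subgroup.centralizer ({x} : Set G))) ^ n) ^ a := by
        rw [← pow_mul, ← pow_mod_orderOf, hord, ha, pow_one]
      exact hxQ' (heq ▸ Subgroup.pow_mem _ hmem' a)
    · have hord1 : orderOf (⟨x, hx⟩ : ↥(Subgroup.centralizer ({x} : Set G))) = 1 :=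
        le_antisymm (hord ▸ h1') (Nat.one_le_iff_ne_zero.mpr (by
          rw [hord]; exact pow_ne_zero k hp.pos.ne'))
      have hxe : (⟨x, hx⟩ : ↥(Subgroup.centralizer ({x} : Set G))) = 1 :=
        orderOf_eq_one_iff.mp hord1
      exact hxQ' (hxe ▸ Subgroup.one_mem _)
  exact ⟨⟨hpe, hns⟩, x, hpe, hns⟩
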